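/- Every set partition π of [n] with n ≥ 1 admits a unique decomposition as a concatenation of atomic partitions: there exist a unique r ≥ 1, unique positive integers m_1,…,m_r with m_1 + … + m_r = n, and unique atomic set partitions π^{(i)} of [m_i] such that π = π^{(1)} | π^{(2)} | … | π^{(r)}. -/

import Mathlib

open Finset

/-- A set partition `π` of `[m] = Finset.range m` is atomic if no subset of its blocks
forms a partition of `[k]` for some `1 ≤ k < m` (equivalently, `π` is not a
concatenation of two nonempty partitions).  Since the blocks are pairwise disjoint and
nonempty, a subset `S` of blocks forms a partition of `[k]` iff its union is
`Finset.range k`. -/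
def IsAtomicPartition {m : ℕ} (π : Finpartition (Finset.range m)) : Prop :=
  ¬ ∃ k : ℕ, 0 < k ∧ k < m ∧ ∃ S ⊆ π.parts, S.sup id = Finset.range k

/-- The blocks of the concatenation `π⁽¹⁾ | π⁽²⁾ | … | π⁽ʳ⁾` of a list of partitions
(of `[m₁], …, [m_r]`), starting at offset `o`: the blocks of the `i`-th partition are
shifted by `o + m₁ + … + m_{i-1}`. -/
def concatParts : ℕ → List ((m : ℕ) × Finpartition (Finset.range m)) → Finset (Finset ℕ)
  | _, [] => ∅
  | o, ⟨m, ρ⟩ :: L => ρ.parts.image (fun β => β.image (· + o)) ∪ concatParts (o + m) L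

namespace AtomicDecompAux

/-- `k` is a cut point of `π`. -/
def IsCut {n : ℕ} (π : Finpartition (Finset.range n)) (k : ℕ) : Prop :=
  (π.parts.filter (· ⊆ Finset.range k)).sup id = Finset.range k

lemma isCut_of_exists {n k : ℕ} {π : Finpartition (Finset.range n)} {S : Finset (Finset ℕ)}
    (hS : S ⊆ π.parts) (h : S.sup id = Finset.range k) : IsCut π k := by
  apply le_antisymm
  · exact Finset.sup_le fun b hb => (mem_filter.1 hb).2
  · have hle : S.sup id ≤ (π.parts.filter (· ⊆ Finset.range k)).sup id := by
      refine Finset.sup_le fun b hb => ?_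
      have hbk : b ⊆ Finset.range k := by
        have := Finset.le_sup (f := id) hb
        rwa [h] at this
      exact Finset.le_sup (f := id) (mem_filter.2 ⟨hS hb, hbk⟩)
    rwa [h] at hle

lemma isCut_top {n : ℕ} (π : Finpartition (Finset.range n)) : IsCut π n := by
  have : π.parts.filter (· ⊆ Finset.range n) = π.parts := by
    apply Finset.filter_true_of_mem
    intro b hb
    have := Finset.le_sup (f := id) hb
    rwa [π.sup_parts] at this
  rw [IsCut, this, π.sup_parts]

lemma le_of_not_subset {n k : ℕ} {π : Finpartition (Finset.range n)} (hk : IsCut π k)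
    {b : Finset ℕ} (hb : b ∈ π.parts) (hbs : ¬ b ⊆ Finset.range k) :
    ∀ x ∈ b, k ≤ x := by
  intro x hx
  by_contra hlt
  push_neg at hlt
  have hxk : x ∈ Finset.range k := Finset.mem_range.2 hlt
  rw [← hk] at hxk
  obtain ⟨a, ha, hxa⟩ := Finset.mem_sup.1 hxk
  obtain ⟨hap, hak⟩ := mem_filter.1 ha
  have : a = b := π.eq_of_mem_parts hap hb hxa hx
  exact hbs (this ▸ hak)

lemma image_sub_add {k : ℕ} {b : Finset ℕ} (h : ∀ x ∈ b, k ≤ x) :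
    (b.image (· - k)).image (· + k) = b := by
  rw [Finset.image_image]
  refine Eq.trans (Finset.image_congr fun x hx => ?_) b.image_id
  exact Nat.sub_add_cancel (h x hx)

lemma image_add_sub {k : ℕ} (b : Finset ℕ) : (b.image (· + k)).image (· - k) = b := by
  rw [Finset.image_image]
  refine Eq.trans (Finset.image_congr fun x _ => ?_) b.image_id
  simp

lemma concatParts_add (L : List ((m : ℕ) × Finpartition (Finset.range m))) (o : ℕ) :
    ∀ a : ℕ, concatParts (o + a) L = (concatParts a L).image (Finset.image (· + o)) := by
  induction L with
  | nil => intro a; simp [concatParts]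
  | cons p L ih =>
    intro a
    obtain ⟨m, ρ⟩ := p
    rw [concatParts, concatParts, Finset.image_union]
    congr 1
    · rw [Finset.image_image]
      refine Finset.image_congr fun β _ => ?_
      rw [Function.comp_apply, Finset.image_image]
      refine Finset.image_congr fun x _ => ?_
      simp only [Function.comp_apply]
      omega
    · rw [show o + a + m = o + (a + m) by omega, ih (a + m)]

lemma concatParts_bound (L : List ((m : ℕ) × Finpartition (Finset.range m))) :
    ∀ (o : ℕ) (b : Finset ℕ), b ∈ concatParts o L →
      b.Nonempty ∧ ∀ x ∈ b, o ≤ x := by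
  induction L with
  | nil => intro o b hb; simp [concatParts] at hb
  | cons p L ih =>
    intro o b hb
    obtain ⟨m, ρ⟩ := p
    rw [concatParts, Finset.mem_union] at hb
    rcases hb with hb | hb
    · obtain ⟨β, hβ, rfl⟩ := Finset.mem_image.1 hb
      have hβne : β.Nonempty := ρ.nonempty_of_mem_parts hβ
      refine ⟨hβne.image _, ?_⟩
      intro x hx
      obtain ⟨y, _, rfl⟩ := Finset.mem_image.1 hx
      omega
    · obtain ⟨hne, hbd⟩ := ih (o + m) b hb
      exact ⟨hne, fun x hx => le_trans (Nat.le_add_right o m) (hbd x hx)⟩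

/-- The lower part: parts contained in `range k`, as a partition of `range k`. -/
def lowerPart {n : ℕ} (π : Finpartition (Finset.range n)) (k : ℕ) (hk : IsCut π k) :
    Finpartition (Finset.range k) :=
  π.ofSubset (Finset.filter_subset _ _) hk

/-- The upper part shifted down by `k`, as a partition of `range (n - k)`. -/
def upperPart {n : ℕ} (π : Finpartition (Finset.range n)) (k : ℕ) (hk : IsCut π k) :
    Finpartition (Finset.range (n - k)) where
  parts := (π.parts.filter (fun b => ¬ b ⊆ Finset.range k)).image (fun b => b.image (· - k))
  supIndep := by
    rw [Finset.supIndep_iff_pairwiseDisjoint]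
    intro c₁ h₁ c₂ h₂ hne
    simp only [Finset.coe_image, Set.mem_image, Finset.mem_coe] at h₁ h₂
    obtain ⟨b₁, hb₁, rfl⟩ := h₁
    obtain ⟨b₂, hb₂, rfl⟩ := h₂
    obtain ⟨hb₁p, hb₁s⟩ := mem_filter.1 hb₁
    obtain ⟨hb₂p, hb₂s⟩ := mem_filter.1 hb₂
    rw [Function.onFun, Finset.disjoint_left]
    intro x hx₁ hx₂
    obtain ⟨y₁, hy₁, hy₁e⟩ := Finset.mem_image.1 hx₁
    obtain ⟨y₂, hy₂, hy₂e⟩ := Finset.mem_image.1 hx₂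
    have hk₁ := le_of_not_subset hk hb₁p hb₁s y₁ hy₁
    have hk₂ := le_of_not_subset hk hb₂p hb₂s y₂ hy₂
    have : y₁ = y₂ := by omega
    subst this
    exact hne (by rw [π.eq_of_mem_parts hb₁p hb₂p hy₁ hy₂])
  sup_parts := by
    ext x
    simp only [Finset.mem_sup, Finset.mem_image, Finset.mem_range, id]
    constructor
    · rintro ⟨c, hc, hxc⟩
      obtain ⟨b, hb, rfl⟩ := hc
      obtain ⟨hbp, hbs⟩ := mem_filter.1 hb
      obtain ⟨y, hy, rfl⟩ := Finset.mem_image.1 hxc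
      have hky := le_of_not_subset hk hbp hbs y hy
      have hyn : y < n := by
        have := Finset.le_sup (f := id) hbp
        rw [π.sup_parts] at this
        exact Finset.mem_range.1 (this hy)
      omega
    · intro hx
      have hxk : x + k ∈ Finset.range n := Finset.mem_range.2 (by omega)
      rw [← π.sup_parts] at hxk
      obtain ⟨b, hb, hxb⟩ := Finset.mem_sup.1 hxk
      have hbs : ¬ b ⊆ Finset.range k := fun hs => by
        have := Finset.mem_range.1 (hs hxb); omega
      exact ⟨b.image (· - k), ⟨b, mem_filter.2 ⟨hb, hbs⟩, rfl⟩,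
        Finset.mem_image.2 ⟨x + k, hxb, by omega⟩⟩
  bot_notMem := by
    intro h
    obtain ⟨b, hb, hbe⟩ := Finset.mem_image.1 h
    have hbE : b = ∅ := Finset.image_eq_empty.1 hbe
    have hbp := (mem_filter.1 hb).1
    rw [hbE] at hbp
    exact π.bot_notMem hbp

lemma lowerPart_parts {n : ℕ} (π : Finpartition (Finset.range n)) (k : ℕ) (hk : IsCut π k) :
    (lowerPart π k hk).parts = π.parts.filter (· ⊆ Finset.range k) := rfl

lemma upperPart_image {n : ℕ} (π : Finpartition (Finset.range n)) (k : ℕ) (hk : IsCut π k) :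
    (upperPart π k hk).parts.image (Finset.image (· + k)) =
      π.parts.filter (fun b => ¬ b ⊆ Finset.range k) := by
  show ((π.parts.filter (fun b => ¬ b ⊆ Finset.range k)).image
      (fun b => b.image (· - k))).image (Finset.image (· + k)) = _
  rw [Finset.image_image]
  refine Eq.trans (Finset.image_congr fun b hb => ?_) Finset.image_id
  obtain ⟨hbp, hbs⟩ := mem_filter.1 hb
  exact image_sub_add (le_of_not_subset hk hbp hbs)

/-- Head analysis for uniqueness: any valid decomposition must start with the minimal
cut point. -/
lemma head_analysis {n : ℕ} (π : Finpartition (Finset.range n)) {k : ℕ}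
    (hkpos : 0 < k) (hkcut : IsCut π k)
    (hmin : ∀ j, 0 < j → IsCut π j → k ≤ j)
    {m : ℕ} {ρ : Finpartition (Finset.range m)}
    {L' : List ((m : ℕ) × Finpartition (Finset.range m))}
    (hat : ∀ p ∈ (⟨m, ρ⟩ :: L' : List ((m : ℕ) × Finpartition (Finset.range m))),
      0 < p.1 ∧ IsAtomicPartition p.2)
    (hcc : concatParts 0 (⟨m, ρ⟩ :: L') = π.parts) :
    m = k ∧ ρ.parts = π.parts.filter (· ⊆ Finset.range k) ∧
      concatParts k L' = π.parts.filter (fun b => ¬ b ⊆ Finset.range k) := by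
  classical
  have hU : ρ.parts ∪ concatParts m L' = π.parts := by
    rw [← hcc, concatParts]
    congr 1
    · refine Eq.trans (Finset.image_congr fun β _ => ?_) Finset.image_id |>.symm
      simp
    · rw [Nat.zero_add]
  have hρsub : ρ.parts ⊆ π.parts := hU ▸ Finset.subset_union_left
  have hcutm : IsCut π m := isCut_of_exists hρsub ρ.sup_parts
  have hm0 : 0 < m := (hat _ List.mem_cons_self).1
  have hkm : k ≤ m := hmin m hm0 hcutm
  have hFρ : ∀ b ∈ π.parts, b ⊆ Finset.range k → b ∈ ρ.parts := by
    intro b hb hbk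
    rw [← hU, Finset.mem_union] at hb
    rcases hb with hb | hb
    · exact hb
    · exfalso
      obtain ⟨hne, hbd⟩ := concatParts_bound L' m b hb
      obtain ⟨x, hx⟩ := hne
      have := Finset.mem_range.1 (hbk hx)
      have := hbd x hx
      omega
  have hmk : m = k := by
    by_contra hne
    have hlt : k < m := lt_of_le_of_ne hkm (Ne.symm hne)
    refine (hat _ List.mem_cons_self).2 ⟨k, hkpos, hlt, π.parts.filter (· ⊆ Finset.range k), ?_, hkcut⟩
    intro b hb
    obtain ⟨hbp, hbk⟩ := mem_filter.1 hb
    exact hFρ b hbp hbk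
  subst hmk
  have hρF : ρ.parts = π.parts.filter (· ⊆ Finset.range m) := by
    apply Finset.Subset.antisymm
    · intro b hb
      refine mem_filter.2 ⟨hρsub hb, ?_⟩
      have := Finset.le_sup (f := id) hb
      rwa [ρ.sup_parts] at this
    · intro b hb
      obtain ⟨hbp, hbk⟩ := mem_filter.1 hb
      exact hFρ b hbp hbk
  refine ⟨rfl, hρF, ?_⟩
  apply Finset.Subset.antisymm
  · intro c hc
    have hcp : c ∈ π.parts := by
      rw [← hU]; exact Finset.mem_union_right _ hc
    obtain ⟨hne, hbd⟩ := concatParts_bound L' m c hc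
    refine mem_filter.2 ⟨hcp, fun hs => ?_⟩
    obtain ⟨x, hx⟩ := hne
    have := Finset.mem_range.1 (hs hx)
    have := hbd x hx
    omega
  · intro b hb
    obtain ⟨hbp, hbs⟩ := mem_filter.1 hb
    have : b ∈ ρ.parts ∪ concatParts m L' := hU ▸ hbp
    rcases Finset.mem_union.1 this with hb' | hb'
    · rw [hρF] at hb'
      exact absurd (mem_filter.1 hb').2 hbs
    · exact hb'

lemma main : ∀ n, 1 ≤ n → ∀ π : Finpartition (Finset.range n),
    ∃! L : List ((m : ℕ) × Finpartition (Finset.range m)),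
      L ≠ [] ∧ (∀ p ∈ L, 0 < p.1 ∧ IsAtomicPartition p.2) ∧
        (L.map fun p => p.1).sum = n ∧ concatParts 0 L = π.parts := by
  intro n
  induction n using Nat.strong_induction_on with
  | _ n IH =>
  intro hn π
  classical
  have hex : ∃ k, 0 < k ∧ IsCut π k := ⟨n, hn, isCut_top π⟩
  obtain ⟨hkpos, hkcut⟩ := Nat.find_spec hex
  set k := Nat.find hex with hkdef
  have hkn : k ≤ n := Nat.find_min' hex ⟨hn, isCut_top π⟩
  have hmin : ∀ j, 0 < j → IsCut π j → k ≤ j := fun j h1 h2 => Nat.find_min' hex ⟨h1, h2⟩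
  rcases eq_or_lt_of_le hkn with hkn' | hkn'
  · -- k = n : π itself is atomic
    have hπat : IsAtomicPartition π := by
      rintro ⟨j, hj0, hjn, S, hS, hsup⟩
      have := hmin j hj0 (isCut_of_exists hS hsup)
      omega
    refine ⟨[⟨n, π⟩], ⟨by simp, ?_, by simp, ?_⟩, ?_⟩
    · rintro p hp
      simp only [List.mem_singleton] at hp
      subst hp
      exact ⟨hn, hπat⟩
    · rw [concatParts, concatParts]
      rw [Finset.union_empty]
      refine Eq.trans (Finset.image_congr fun β _ => ?_) Finset.image_id
      simp
    · rintro L ⟨hne, hat, hsum, hcc⟩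
      obtain ⟨⟨m, ρ⟩, L', rfl⟩ : ∃ p L', L = p :: L' := by
        cases L with
        | nil => exact absurd rfl hne
        | cons p L' => exact ⟨p, L', rfl⟩
      obtain ⟨hmk, hρF, _⟩ := head_analysis π hkpos hkcut hmin hat hcc
      have hmn : m = n := by omega
      subst hmn
      have hL' : L' = [] := by
        cases L' with
        | nil => rfl
        | cons q L'' =>
          exfalso
          simp only [List.map_cons, List.sum_cons] at hsum
          have hq := (hat q (by simp)).1
          have : ∀ x ∈ (L''.map fun p => p.1), 0 ≤ x := fun x _ => Nat.zero_le x
          omega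
      subst hL'
      have hρπ : ρ = π := by
        apply Finpartition.ext
        rw [hρF]
        apply Finset.filter_true_of_mem
        intro b hb
        have := Finset.le_sup (f := id) hb
        rw [π.sup_parts] at this
        rw [hkn']
        exact this
      rw [hρπ]
  · -- k < n : recurse on the upper part
    have hlow_at : IsAtomicPartition (lowerPart π k hkcut) := by
      rintro ⟨j, hj0, hjk, S, hS, hsup⟩
      rw [lowerPart_parts] at hS
      have hS' : S ⊆ π.parts := hS.trans (Finset.filter_subset _ _)
      have := hmin j hj0 (isCut_of_exists hS' hsup)
      omega
    have hnk1 : 1 ≤ n - k := by omega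
    obtain ⟨L₀, ⟨hne₀, hat₀, hsum₀, hcc₀⟩, huniq₀⟩ := IH (n - k) (by omega) hnk1 (upperPart π k hkcut)
    refine ⟨⟨k, lowerPart π k hkcut⟩ :: L₀, ⟨by simp, ?_, ?_, ?_⟩, ?_⟩
    · rintro p hp
      rcases List.mem_cons.1 hp with rfl | hp
      · exact ⟨hkpos, hlow_at⟩
      · exact hat₀ p hp
    · simp only [List.map_cons, List.sum_cons, hsum₀]
      omega
    · rw [concatParts, Nat.zero_add]
      have h1 : (lowerPart π k hkcut).parts.image (fun β => β.image (· + 0)) =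
          π.parts.filter (· ⊆ Finset.range k) := by
        rw [lowerPart_parts]
        refine Eq.trans (Finset.image_congr fun β _ => ?_) Finset.image_id
        simp
      have h2 : concatParts k L₀ = π.parts.filter (fun b => ¬ b ⊆ Finset.range k) := by
        have := concatParts_add L₀ k 0
        rw [Nat.add_zero] at this
        rw [this, hcc₀, upperPart_image]
      rw [h1, h2, Finset.filter_union_filter_not_eq]
    · rintro L ⟨hne, hat, hsum, hcc⟩
      obtain ⟨⟨m, ρ⟩, L', rfl⟩ : ∃ p L', L = p :: L' := by
        cases L with
        | nil => exact absurd rfl hne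
        | cons p L' => exact ⟨p, L', rfl⟩
      obtain ⟨hmk, hρF, htail⟩ := head_analysis π hkpos hkcut hmin hat hcc
      subst hmk
      have hρlow : ρ = lowerPart π k hkcut := by
        apply Finpartition.ext
        rw [hρF, lowerPart_parts]
      have htail' : concatParts 0 L' = (upperPart π k hkcut).parts := by
        have hshift := concatParts_add L' k 0
        rw [Nat.add_zero] at hshift
        rw [hshift] at htail
        have := congrArg (Finset.image (Finset.image (· - k))) htail
        rw [Finset.image_image] at this
        have hid : (concatParts 0 L').image
            ((Finset.image (· - k)) ∘ (Finset.image (· + k))) = concatParts 0 L' := by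
          refine Eq.trans (Finset.image_congr fun c _ => ?_) Finset.image_id
          exact image_add_sub c
        rw [hid] at this
        rw [this]
        rfl
      have hL'sum : (L'.map fun p => p.1).sum = n - k := by
        simp only [List.map_cons, List.sum_cons] at hsum
        omega
      have hL'ne : L' ≠ [] := by
        intro h
        subst h
        simp at hL'sum
        omega
      have : L' = L₀ := huniq₀ L' ⟨hL'ne, fun p hp => hat p (List.mem_cons_of_mem _ hp),
        hL'sum, htail'⟩
      rw [this, hρlow]

end AtomicDecompAux

theorem unique_atomic_decomposition (n : ℕ) (hn : 1 ≤ n)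
    (π : Finpartition (Finset.range n)) :
    ∃! L : List ((m : ℕ) × Finpartition (Finset.range m)),
      L ≠ [] ∧ (∀ p ∈ L, 0 < p.1 ∧ IsAtomicPartition p.2) ∧
        (L.map fun p => p.1).sum = n ∧ concatParts 0 L = π.parts := by
  exact AtomicDecompAux.main n hn π
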